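/- arXiv:1704.06907 — 3 statements merged into one kernel-verified Lean document; each statement's English description precedes it below -/
import Mathlib

section
/- Let 𝒫 be a finite converging family of paths in a graph, all ending at a common vertex v, where converging means: if two paths of 𝒫 share a vertex w, their suffixes from w to v coincide. Suppose additionally that the paths in 𝒫 have pairwise distinct starting vertices. Then the union of the paths in 𝒫, viewed as a set of edges, forms a tree (an in-tree rooted at v) on the vertices it covers. -/
/-- The suffix of the list `l` starting at the first occurrence of `w`. -/
def suffixFrom {V : Type*} [DecidableEq V] (w : V) (l : List V) : List V :=
  l.dropWhile (fun x => x != w)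

/-- The edge relation of the union of a family of paths. -/
def unionEdge {V : Type*} (Ps : Finset (List V)) (a b : V) : Prop :=
  ∃ p ∈ Ps, (a, b) ∈ p.zip p.tail

set_option linter.unusedSectionVars false

section Aux
variable {V : Type*} [DecidableEq V]

lemma suffixFrom_suffix (w : V) (l : List V) : suffixFrom w l <:+ l :=
  List.dropWhile_suffix _

lemma suffixFrom_cons_self (w : V) (t : List V) : suffixFrom w (w :: t) = w :: t := by
  simp [suffixFrom, List.dropWhile_cons]

lemma suffixFrom_cons_ne {x w : V} (t : List V) (h : x ≠ w) :
    suffixFrom w (x :: t) = suffixFrom w t := by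
  simp [suffixFrom, List.dropWhile_cons, h]

lemma zip_suffix_subset : ∀ (u s : List V) (x : V × V),
    x ∈ s.zip s.tail → x ∈ (u ++ s).zip (u ++ s).tail := by
  intro u
  induction u with
  | nil => intro s x h; simpa using h
  | cons a u ih =>
    intro s x h
    have h' := ih s x h
    cases hl : u ++ s with
    | nil => rw [hl] at h'; simp at h'
    | cons y t =>
      rw [hl] at h'
      show x ∈ (a :: (u ++ s)).zip (a :: (u ++ s)).tail
      rw [hl]
      simp only [List.tail_cons, List.zip_cons_cons, List.mem_cons]
      right
      simpa using h'

lemma suffixFrom_of_mem {a : V} : ∀ {l : List V}, a ∈ l → ∃ t, suffixFrom a l = a :: t := by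
  intro l
  induction l with
  | nil => simp
  | cons x rest ih =>
    intro h
    by_cases hx : x = a
    · subst hx; exact ⟨rest, suffixFrom_cons_self _ _⟩
    · rw [suffixFrom_cons_ne rest hx]
      rcases List.mem_cons.1 h with h' | h'
      · exact absurd h'.symm hx
      · exact ih h'

lemma suffixFrom_of_zip {a b : V} : ∀ {l : List V}, l.Nodup → (a, b) ∈ l.zip l.tail →
    ∃ t, suffixFrom a l = a :: b :: t := by
  intro l
  induction l with
  | nil => simp
  | cons x rest ih =>
    intro hnd h
    cases rest with
    | nil => simp at h
    | cons y t =>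
      simp only [List.tail_cons, List.zip_cons_cons, List.mem_cons] at h
      rcases h with h | h
      · injection h with h1 h2
        subst h1; subst h2
        exact ⟨t, suffixFrom_cons_self _ _⟩
      · have ha : a ∈ y :: t := (List.of_mem_zip h).1
        have hx : x ≠ a := by
          intro e; subst e; exact (List.nodup_cons.1 hnd).1 ha
        rw [suffixFrom_cons_ne _ hx]
        exact ih (List.nodup_cons.1 hnd).2 h

lemma zip_of_suffixFrom {a b : V} {l t : List V} (h : suffixFrom a l = a :: b :: t) :
    (a, b) ∈ l.zip l.tail := by
  obtain ⟨u, hu⟩ := suffixFrom_suffix a l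
  rw [h] at hu
  subst hu
  exact zip_suffix_subset u (a :: b :: t) (a, b) (by simp)

lemma getLast?_of_suffix {s l : List V} (h : s <:+ l) (hs : s ≠ []) :
    s.getLast? = l.getLast? := by
  obtain ⟨u, rfl⟩ := h
  rw [List.getLast?_append]
  cases hg : s.getLast? with
  | none => exact absurd (List.getLast?_eq_none_iff.1 hg) hs
  | some b => rfl

lemma reach_aux (v : V) : ∀ (l : List V), l.getLast? = some v → ∀ a ∈ l,
    Relation.ReflTransGen (fun x y => (x, y) ∈ l.zip l.tail) a v := by
  intro l
  induction l with
  | nil => simp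
  | cons x rest ih =>
    intro hl a ha
    cases rest with
    | nil =>
      simp at hl ha
      subst hl; subst ha
      exact Relation.ReflTransGen.refl
    | cons y t =>
      have hl' : (y :: t).getLast? = some v := by
        rwa [List.getLast?_cons_cons] at hl
      have mono : ∀ {c d : V}, Relation.ReflTransGen
          (fun p q => (p, q) ∈ (y :: t).zip (y :: t).tail) c d →
          Relation.ReflTransGen
          (fun p q => (p, q) ∈ (x :: y :: t).zip (x :: y :: t).tail) c d := by
        intro c d h
        refine Relation.ReflTransGen.mono ?_ c d h
        intro p q hpq
        simp only [List.tail_cons, List.zip_cons_cons, List.mem_cons]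
        right; simpa using hpq
      rcases List.mem_cons.1 ha with rfl | ha'
      · refine Relation.ReflTransGen.head ?_ (mono (ih hl' y (by simp)))
        simp
      · exact mono (ih hl' a ha')

end Aux

/-- a converging family of (simple) paths to a common endpoint `v`
with pairwise distinct starting vertices has, as a union of edges, the structure
of an in-tree rooted at `v`: every covered vertex other than `v` has a unique
successor, `v` has none, and every covered vertex reaches `v`. -/
theorem stmt_5 {V : Type*} [DecidableEq V] (v : V) (Ps : Finset (List V))
    (hne : ∀ p ∈ Ps, p ≠ [])
    (hlast : ∀ p ∈ Ps, p.getLast? = some v)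
    (hnodup : ∀ p ∈ Ps, p.Nodup)
    (hheads : ∀ p ∈ Ps, ∀ q ∈ Ps, p.head? = q.head? → p = q)
    (hconv : ∀ p ∈ Ps, ∀ q ∈ Ps, ∀ w, w ∈ p → w ∈ q →
      suffixFrom w p = suffixFrom w q) :
    (∀ a, (∃ p ∈ Ps, a ∈ p) → a ≠ v → ∃! b, unionEdge Ps a b) ∧
    (∀ b, ¬ unionEdge Ps v b) ∧
    (∀ a, (∃ p ∈ Ps, a ∈ p) → Relation.ReflTransGen (unionEdge Ps) a v) := by
  refine ⟨?_, ?_, ?_⟩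
  · rintro a ⟨p, hp, hap⟩ hav
    obtain ⟨t, ht⟩ := suffixFrom_of_mem hap
    have hgl : (a :: t).getLast? = some v := by
      rw [← ht, getLast?_of_suffix (suffixFrom_suffix a p) (by rw [ht]; simp)]
      exact hlast p hp
    cases t with
    | nil => simp at hgl; exact absurd hgl hav
    | cons b t' =>
      refine ⟨b, ⟨p, hp, zip_of_suffixFrom ht⟩, ?_⟩
      rintro b' ⟨q, hq, hzq⟩
      have haq : a ∈ q := (List.of_mem_zip hzq).1
      obtain ⟨s, hs⟩ := suffixFrom_of_zip (hnodup q hq) hzq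
      have hconv' := hconv p hp q hq a hap haq
      rw [ht, hs] at hconv'
      injection hconv' with _ h2
      injection h2 with h3 _
      exact h3.symm
  · rintro b ⟨p, hp, hz⟩
    obtain ⟨t, ht⟩ := suffixFrom_of_zip (hnodup p hp) hz
    have hvp : v ∈ p := (List.of_mem_zip hz).1
    have hnd : (v :: b :: t).Nodup :=
      ht ▸ (hnodup p hp).sublist (suffixFrom_suffix v p).sublist
    have hgl : (v :: b :: t).getLast? = some v := by
      rw [← ht, getLast?_of_suffix (suffixFrom_suffix v p) (by rw [ht]; simp)]
      exact hlast p hp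
    rw [List.getLast?_cons_cons] at hgl
    exact (List.nodup_cons.1 hnd).1 (List.mem_of_getLast? hgl)
  · rintro a ⟨p, hp, hap⟩
    exact Relation.ReflTransGen.mono (fun x y h => ⟨p, hp, h⟩) a v (reach_aux v p (hlast p hp) a hap)
end

section
/- Let 𝒫 be a finite converging family of paths in a graph to a common vertex v (if two paths share a vertex w, their suffixes from w to v coincide), with pairwise distinct sources. Then the number of vertices w that lie on at least two distinct paths of 𝒫 and are the first such shared vertex along some path (merge points) is at most |𝒫| − 1. -/
/-- `w` is a merge point of the family `Ps`: it lies on two distinct paths and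
is the first shared vertex along one of them. -/
def IsMergePoint {V : Type*} [DecidableEq V] (Ps : Finset (List V)) (w : V) : Prop :=
  ∃ p ∈ Ps, ∃ q ∈ Ps, p ≠ q ∧ w ∈ p ∧ w ∈ q ∧
    ∀ x ∈ p.takeWhile (fun x => x != w), x ∉ q

/-- The vertex just before the first occurrence of `w` in `r` (if any). -/
def mkey {V : Type*} [DecidableEq V] (r : List V) (w : V) : Option V :=
  (r.takeWhile (fun x => x != w)).getLast?

theorem suffixFrom_head {V : Type*} [DecidableEq V] {w : V} {l : List V} (h : w ∈ l) :
    ∃ t, suffixFrom w l = w :: t := by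
  induction l with
  | nil => cases h
  | cons a l ih =>
    rw [suffixFrom, List.dropWhile_cons]
    by_cases haw : a = w
    · subst haw; simp
    · have hw : w ∈ l := by
        rcases List.mem_cons.mp h with rfl | hw
        · exact absurd rfl haw
        · exact hw
      simpa [bne_iff_ne, haw, suffixFrom] using ih hw

theorem suffixFrom_decomp {V : Type*} [DecidableEq V] (w : V) (l : List V) :
    l = l.takeWhile (fun x => x != w) ++ suffixFrom w l :=
  (List.takeWhile_append_dropWhile).symm

/-- Ordering dichotomy. -/
theorem mem_suffixFrom_or {V : Type*} [DecidableEq V] {p : List V} {w1 w2 : V}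
    (h1 : w1 ∈ p) (h2 : w2 ∈ p) :
    w2 ∈ suffixFrom w1 p ∨ w1 ∈ suffixFrom w2 p := by
  induction p with
  | nil => cases h1
  | cons a l ih =>
    by_cases ha1 : a = w1
    · left
      subst ha1
      rw [suffixFrom, List.dropWhile_cons]
      simpa using h2
    · by_cases ha2 : a = w2
      · right
        subst ha2
        rw [suffixFrom, List.dropWhile_cons]
        simpa using h1
      · have h1' : w1 ∈ l := (List.mem_cons.mp h1).resolve_left (fun e => ha1 e.symm)
        have h2' : w2 ∈ l := (List.mem_cons.mp h2).resolve_left (fun e => ha2 e.symm)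
        have e1 : suffixFrom w1 (a :: l) = suffixFrom w1 l := by
          rw [suffixFrom, List.dropWhile_cons]; simp [bne_iff_ne, ha1, suffixFrom]
        have e2 : suffixFrom w2 (a :: l) = suffixFrom w2 l := by
          rw [suffixFrom, List.dropWhile_cons]; simp [bne_iff_ne, ha2, suffixFrom]
        rw [e1, e2]
        exact ih h1' h2'

/-- Coherence: paths that merged at `w1` have the same key at any later vertex. -/
theorem key_eq_of_suffix {V : Type*} [DecidableEq V] {p q : List V} {w1 w2 : V}
    (hp : p.Nodup) (hq : q.Nodup) (hw1p : w1 ∈ p)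
    (hs : suffixFrom w1 p = suffixFrom w1 q)
    (hw2 : w2 ∈ suffixFrom w1 p) (hne : w2 ≠ w1) :
    w2 ∈ q ∧ mkey q w2 = mkey p w2 := by
  obtain ⟨t, ht⟩ := suffixFrom_head hw1p
  have hpdec := suffixFrom_decomp w1 p
  have hqdec := suffixFrom_decomp w1 q
  rw [← hs] at hqdec
  have hw2q : w2 ∈ q := by
    rw [hqdec]; exact List.mem_append_right _ hw2
  refine ⟨hw2q, ?_⟩
  -- prefixes are disjoint from the common suffix
  have hdq : ∀ x ∈ q.takeWhile (fun x => x != w1), (x != w2) = true := by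
    intro x hx
    have hnd : (q.takeWhile (fun x => x != w1) ++ suffixFrom w1 p).Nodup := by
      rw [← hqdec]; exact hq
    have hdisj := List.disjoint_of_nodup_append hnd
    simp only [bne_iff_ne]
    intro e; subst e
    exact hdisj hx hw2
  have hdp : ∀ x ∈ p.takeWhile (fun x => x != w1), (x != w2) = true := by
    intro x hx
    have hnd : (p.takeWhile (fun x => x != w1) ++ suffixFrom w1 p).Nodup := by
      rw [← hpdec]; exact hp
    have hdisj := List.disjoint_of_nodup_append hnd
    simp only [bne_iff_ne]
    intro e; subst e
    exact hdisj hx hw2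
  -- the common suffix has a nonempty takeWhile up to w2
  have hts : (suffixFrom w1 p).takeWhile (fun x => x != w2)
      = w1 :: (t.takeWhile (fun x => x != w2)) := by
    rw [ht, List.takeWhile_cons]
    simp [bne_iff_ne, hne.symm]
  obtain ⟨u, hu⟩ : ∃ u, ((suffixFrom w1 p).takeWhile (fun x => x != w2)).getLast? = some u := by
    rw [hts]
    exact Option.isSome_iff_exists.mp (List.getLast?_isSome.mpr (by simp))
  have cq : mkey q w2 = some u := by
    rw [mkey]
    conv_lhs => rw [hqdec]
    rw [List.takeWhile_append_of_pos hdq, List.getLast?_append, hu, Option.some_or]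
  have cp : mkey p w2 = some u := by
    rw [mkey]
    conv_lhs => rw [hpdec]
    rw [List.takeWhile_append_of_pos hdp, List.getLast?_append, hu, Option.some_or]
  rw [cq, cp]

/-- a converging family of simple paths to `v` with pairwise
distinct sources has at most `|Ps| − 1` merge points. -/
theorem stmt_15 {V : Type*} [DecidableEq V] (v : V) (Ps : Finset (List V))
    (hne : ∀ p ∈ Ps, p ≠ [])
    (hlast : ∀ p ∈ Ps, p.getLast? = some v)
    (hnodup : ∀ p ∈ Ps, p.Nodup)
    (hheads : ∀ p ∈ Ps, ∀ q ∈ Ps, p.head? = q.head? → p = q)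
    (hconv : ∀ p ∈ Ps, ∀ q ∈ Ps, ∀ w, w ∈ p → w ∈ q →
      suffixFrom w p = suffixFrom w q) :
    {w : V | IsMergePoint Ps w}.ncard ≤ Ps.card - 1 := by
  classical
  letI : LinearOrder (List V) := IsWellOrder.linearOrder WellOrderingRel
  rcases Ps.eq_empty_or_nonempty with rfl | hPs
  · have : {w : V | IsMergePoint (∅ : Finset (List V)) w} = ∅ := by
      ext w; simp [IsMergePoint]
    simp [this]
  set μ := Ps.min' hPs with hμ
  set T : V → Finset (List V) := fun w => Ps.filter (fun r => w ∈ r) with hT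
  -- at a merge point, two paths through w have different keys
  have hN : ∀ w, IsMergePoint Ps w → ∃ p ∈ T w, ∃ q ∈ T w, mkey p w ≠ mkey q w := by
    rintro w ⟨p, hp, q, hq, hpq, hwp, hwq, hfirst⟩
    refine ⟨p, Finset.mem_filter.mpr ⟨hp, hwp⟩, q, Finset.mem_filter.mpr ⟨hq, hwq⟩, ?_⟩
    intro heq
    cases hcase : mkey p w with
    | none =>
      have hpnil : p.takeWhile (fun x => x != w) = [] :=
        List.getLast?_eq_none_iff.mp hcase
      have hqnil : q.takeWhile (fun x => x != w) = [] :=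
        List.getLast?_eq_none_iff.mp (heq.symm.trans hcase)
      obtain ⟨tp, htp⟩ := suffixFrom_head hwp
      obtain ⟨tq, htq⟩ := suffixFrom_head hwq
      have ep : p = w :: tp := by
        have := suffixFrom_decomp w p; rwa [hpnil, htp, List.nil_append] at this
      have eq' : q = w :: tq := by
        have := suffixFrom_decomp w q; rwa [hqnil, htq, List.nil_append] at this
      exact hpq (hheads p hp q hq (by rw [ep, eq']; rfl))
    | some u =>
      have hu : u ∈ p.takeWhile (fun x => x != w) :=
        List.mem_of_getLast? hcase
      have huq : u ∈ q.takeWhile (fun x => x != w) :=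
        List.mem_of_getLast? (heq.symm.trans hcase)
      exact hfirst u hu ((List.takeWhile_sublist _).mem huq)
  have hTne : ∀ w, IsMergePoint Ps w → (T w).Nonempty := by
    intro w h
    obtain ⟨p, hp, -⟩ := hN w h
    exact ⟨p, hp⟩
  have hFne : ∀ w (h : IsMergePoint Ps w),
      ((T w).filter (fun r => mkey r w ≠ mkey ((T w).min' (hTne w h)) w)).Nonempty := by
    intro w h
    obtain ⟨p, hp, q, hq, hkne⟩ := hN w h
    by_cases hc : mkey p w = mkey ((T w).min' (hTne w h)) w
    · exact ⟨q, Finset.mem_filter.mpr ⟨hq, fun e => hkne (hc.trans e.symm)⟩⟩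
    · exact ⟨p, Finset.mem_filter.mpr ⟨hp, hc⟩⟩
  set f : V → List V := fun w =>
    if h : IsMergePoint Ps w then
      ((T w).filter (fun r => mkey r w ≠ mkey ((T w).min' (hTne w h)) w)).min' (hFne w h)
    else [] with hf
  have hfw : ∀ w (h : IsMergePoint Ps w),
      f w ∈ T w ∧ mkey (f w) w ≠ mkey ((T w).min' (hTne w h)) w := by
    intro w h
    have hm := Finset.min'_mem _ (hFne w h)
    rw [Finset.mem_filter] at hm
    have : f w = ((T w).filter
        (fun r => mkey r w ≠ mkey ((T w).min' (hTne w h)) w)).min' (hFne w h) := by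
      rw [hf]; simp [dif_pos h]
    rw [this]
    exact hm
  have hmin_lt : ∀ w (h : IsMergePoint Ps w), (T w).min' (hTne w h) < f w := by
    intro w h
    obtain ⟨hmem, hkne⟩ := hfw w h
    exact lt_of_le_of_ne (Finset.min'_le _ _ hmem) (fun e => hkne (by rw [← e]))
  have hB : ∀ w (h : IsMergePoint Ps w), ∀ q ∈ T w, q < f w →
      mkey q w = mkey ((T w).min' (hTne w h)) w := by
    intro w h q hq hlt
    by_contra hc
    have hqf : q ∈ (T w).filter (fun r => mkey r w ≠ mkey ((T w).min' (hTne w h)) w) :=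
      Finset.mem_filter.mpr ⟨hq, hc⟩
    have hle : f w ≤ q := by
      have := Finset.min'_le _ q hqf
      have ef : f w = ((T w).filter
          (fun r => mkey r w ≠ mkey ((T w).min' (hTne w h)) w)).min' (hFne w h) := by
        rw [hf]; simp [dif_pos h]
      rw [ef]; exact this
    exact absurd hlt (not_lt.mpr hle)
  -- core asymmetric injectivity argument
  have hcore : ∀ w1 w2, IsMergePoint Ps w1 → IsMergePoint Ps w2 → f w1 = f w2 →
      w2 ∈ suffixFrom w1 (f w1) → w2 ≠ w1 → False := by
    intro w1 w2 h1 h2 hff hmem hne12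
    obtain ⟨hpT1, -⟩ := hfw w1 h1
    have hpPs : f w1 ∈ Ps := (Finset.mem_filter.mp hpT1).1
    have hw1p : w1 ∈ f w1 := (Finset.mem_filter.mp hpT1).2
    have hqT1 : (T w1).min' (hTne w1 h1) ∈ T w1 := Finset.min'_mem _ _
    have hqPs : (T w1).min' (hTne w1 h1) ∈ Ps := (Finset.mem_filter.mp hqT1).1
    have hw1q : w1 ∈ (T w1).min' (hTne w1 h1) := (Finset.mem_filter.mp hqT1).2
    have hconv1 := hconv (f w1) hpPs ((T w1).min' (hTne w1 h1)) hqPs w1 hw1p hw1q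
    obtain ⟨hw2q, hkeq⟩ := key_eq_of_suffix (hnodup _ hpPs) (hnodup _ hqPs) hw1p
      hconv1 hmem hne12
    have hqT2 : (T w1).min' (hTne w1 h1) ∈ T w2 := Finset.mem_filter.mpr ⟨hqPs, hw2q⟩
    have hqlt : (T w1).min' (hTne w1 h1) < f w2 := hff ▸ hmin_lt w1 h1
    have hbb := hB w2 h2 _ hqT2 hqlt
    obtain ⟨-, hkne2⟩ := hfw w2 h2
    apply hkne2
    rw [← hbb, ← hff] at *
    rw [← hkeq]
  have hmaps : ∀ w ∈ {w : V | IsMergePoint Ps w},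
      f w ∈ (↑(Ps.erase μ) : Set (List V)) := by
    intro w h
    obtain ⟨hTm, -⟩ := hfw w h
    have hfPs : f w ∈ Ps := (Finset.mem_filter.mp hTm).1
    have hμle : μ ≤ (T w).min' (hTne w h) :=
      Finset.min'_le _ _ (Finset.mem_of_mem_filter _ (Finset.min'_mem _ _))
    have : μ < f w := lt_of_le_of_lt hμle (hmin_lt w h)
    exact Finset.mem_coe.mpr (Finset.mem_erase.mpr ⟨(ne_of_lt this).symm, hfPs⟩)
  have hinj : Set.InjOn f {w : V | IsMergePoint Ps w} := by
    intro w1 h1 w2 h2 hff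
    by_contra hne12
    have hw1 : w1 ∈ f w1 := (Finset.mem_filter.mp (hfw w1 h1).1).2
    have hw2 : w2 ∈ f w1 := by
      rw [hff]; exact (Finset.mem_filter.mp (hfw w2 h2).1).2
    rcases mem_suffixFrom_or hw1 hw2 with h | h
    · exact hcore w1 w2 h1 h2 hff h (Ne.symm hne12)
    · rw [hff] at h
      exact hcore w2 w1 h2 h1 hff.symm h hne12
  calc {w : V | IsMergePoint Ps w}.ncard
      ≤ (↑(Ps.erase μ) : Set (List V)).ncard :=
        Set.ncard_le_ncard_of_injOn f hmaps hinj (Ps.erase μ).finite_toSet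
    _ = Ps.card - 1 := by
        rw [Set.ncard_coe_finset, Finset.card_erase_of_mem (Ps.min'_mem hPs)]
end

section
/- Let G be a graph with unit edge lengths, v a vertex, and let P and P' be two shortest paths from sources s and s' to v avoiding edge sets F and F' respectively (|F|, |F'| ≤ 2), chosen by a fixed preference rule such that among all shortest replacement paths the preferred one has the lexicographically smallest vertex sequence. If the suffixes P[w,v] and P'[w,v] from a common vertex w to v both avoid F ∪ F' and neither suffix meets F ∪ F' internally, then P[w,v] = P'[w,v]. -/
/-- A walk in the (undirected) graph `E` with unit lengths avoiding the edge
set `F` in either orientation. -/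
def AvoidingWalk {V : Type*} (E : V → V → Prop) (F : Set (V × V))
    (s v : V) (P : List V) : Prop :=
  List.Chain' (fun a b => E a b ∧ (a, b) ∉ F ∧ (b, a) ∉ F) P ∧
    P.head? = some s ∧ P.getLast? = some v

/-- `P` is the preferred replacement path for `(s, F)`: a shortest avoiding
walk, lexicographically smallest among shortest ones. -/
def Preferred {V : Type*} [LinearOrder V] (E : V → V → Prop) (F : Set (V × V))
    (s v : V) (P : List V) : Prop :=
  AvoidingWalk E F s v P ∧
    ∀ Q : List V, AvoidingWalk E F s v Q →
      P.length ≤ Q.length ∧ (Q.length = P.length → P = Q ∨ List.Lex (· < ·) P Q)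


lemma head?_suffixFrom {V : Type*} [DecidableEq V] {w : V} {l : List V}
    (h : w ∈ l) : (suffixFrom w l).head? = some w := by
  induction l with
  | nil => simp at h
  | cons x xs ih =>
    by_cases hx : x = w
    · subst hx
      show (List.dropWhile (fun y => y != x) (x :: xs)).head? = some x
      rw [List.dropWhile_cons, if_neg (by simp)]
      rfl
    · have hw' : w ∈ xs := by
        rcases List.mem_cons.1 h with h1 | h1
        · exact absurd h1.symm hx
        · exact h1
      show (List.dropWhile (fun x => x != w) (x :: xs)).head? = some w
      rw [List.dropWhile_cons, if_pos (by simp [hx])]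
      exact ih hw'

lemma chain'_iff_zip {α : Type*} {R : α → α → Prop} :
    ∀ l : List α, List.Chain' R l ↔ ∀ a b, (a, b) ∈ l.zip l.tail → R a b
  | [] => by simp [List.Chain']
  | [x] => by simp [List.Chain']
  | x :: y :: l => by
    rw [show List.Chain' R (x :: y :: l) ↔ R x y ∧ List.Chain' R (y :: l) from List.isChain_cons_cons, chain'_iff_zip (y :: l)]
    constructor
    · rintro ⟨hxy, h⟩ a b hab
      simp only [List.tail_cons, List.zip_cons_cons, List.mem_cons, Prod.mk.injEq] at hab
      rcases hab with ⟨rfl, rfl⟩ | hab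
      · exact hxy
      · exact h a b hab
    · intro h
      refine ⟨h x y (by simp), fun a b hab => h a b ?_⟩
      simp only [List.tail_cons, List.zip_cons_cons, List.mem_cons]
      exact Or.inr hab

lemma lex_append_left {α : Type*} [LinearOrder α] :
    ∀ (l a b : List α), List.Lex (· < ·) (l ++ a) (l ++ b) → List.Lex (· < ·) a b
  | [], a, b, h => h
  | x :: xs, a, b, h => by
    cases h with
    | rel h => exact absurd h (lt_irrefl x)
    | cons h => exact lex_append_left xs a b h

section Aux
variable {V : Type*} [LinearOrder V]

/-- Key step: if `S'` is a chain (avoiding `F`) from `w` to `v`, then the suffix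
of the preferred path `P` from `w` is at most as long, and lex-below on ties. -/
lemma aux (E : V → V → Prop) (v s : V) (F : Set (V × V)) (P : List V)
    (hP : Preferred E F s v P) (w : V) (hw : w ∈ P) (S' : List V)
    (hc : List.Chain' (fun a b => E a b ∧ (a, b) ∉ F ∧ (b, a) ∉ F) S')
    (hh : S'.head? = some w) (hl : S'.getLast? = some v) :
    (suffixFrom w P).length ≤ S'.length ∧
      (S'.length = (suffixFrom w P).length →
        suffixFrom w P = S' ∨ List.Lex (· < ·) (suffixFrom w P) S') := by
  classical
  set pre := P.takeWhile (fun x => x != w) with hpre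
  set S := suffixFrom w P with hS
  have hsplit : pre ++ S = P := List.takeWhile_append_dropWhile ..
  have hShead : S.head? = some w := head?_suffixFrom hw
  have hSne : S ≠ [] := by intro h; rw [h] at hShead; simp at hShead
  have hS'ne : S' ≠ [] := by intro h; rw [h] at hh; simp at hh
  obtain ⟨hchainP, hheadP, hlastP⟩ := hP.1
  have hchainP' : List.Chain' _ (pre ++ S) := hsplit ▸ hchainP
  simp only [List.Chain'] at hchainP'
  rw [List.isChain_append] at hchainP'
  obtain ⟨hcpre, hcS, hjunc⟩ := hchainP'
  -- the swapped walk
  have hQ : AvoidingWalk E F s v (pre ++ S') := by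
    refine ⟨List.isChain_append.2 ⟨hcpre, hc, ?_⟩, ?_, ?_⟩
    · intro x hx y hy
      rw [hh, Option.mem_some_iff] at hy
      subst hy
      exact hjunc x hx w (by rw [hShead]; rfl)
    · rw [List.head?_append, hh, ← hShead, ← List.head?_append, hsplit, hheadP]
    · rw [List.getLast?_append_of_ne_nil _ hS'ne, hl]
  have hlen := hP.2 (pre ++ S') hQ
  have hPlen : P.length = pre.length + S.length := by
    rw [← hsplit, List.length_append]
  have h1 : S.length ≤ S'.length := by
    have := hlen.1
    rw [hPlen, List.length_append] at this
    omega
  refine ⟨h1, fun heq => ?_⟩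
  have h2 : (pre ++ S').length = P.length := by
    rw [List.length_append, hPlen, heq]
  rcases hlen.2 h2 with h | h
  · left
    exact List.append_cancel_left (hsplit.trans h)
  · right
    rw [← hsplit] at h
    exact lex_append_left pre S S' h

end Aux


/-- two preferred replacement paths whose suffixes from a common
vertex `w` avoid both fault sets (and do not meet them internally) have
identical suffixes from `w` to `v`. -/
theorem stmt_16 {V : Type*} [LinearOrder V] (E : V → V → Prop) (v s s' : V)
    (F F' : Set (V × V)) (hF : F.ncard ≤ 2) (hF' : F'.ncard ≤ 2)
    (P P' : List V)
    (hP : Preferred E F s v P) (hP' : Preferred E F' s' v P')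
    (w : V) (hwP : w ∈ P) (hwP' : w ∈ P')
    (havoidP : ∀ a b, (a, b) ∈ (suffixFrom w P).zip (suffixFrom w P).tail →
      (a, b) ∉ F ∪ F' ∧ (b, a) ∉ F ∪ F')
    (havoidP' : ∀ a b, (a, b) ∈ (suffixFrom w P').zip (suffixFrom w P').tail →
      (a, b) ∉ F ∪ F' ∧ (b, a) ∉ F ∪ F')
    (hintP : ∀ x ∈ suffixFrom w P, x ≠ w → x ≠ v →
      ∀ e ∈ F ∪ F', x ≠ e.1 ∧ x ≠ e.2)
    (hintP' : ∀ x ∈ suffixFrom w P', x ≠ w → x ≠ v →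
      ∀ e ∈ F ∪ F', x ≠ e.1 ∧ x ≠ e.2) :
    suffixFrom w P = suffixFrom w P' := by
  classical
  set S := suffixFrom w P with hSdef
  set S' := suffixFrom w P' with hS'def
  -- basic structural facts
  have hShead : S.head? = some w := head?_suffixFrom hwP
  have hS'head : S'.head? = some w := head?_suffixFrom hwP'
  have hSne : S ≠ [] := by intro h; rw [h] at hShead; simp at hShead
  have hS'ne : S' ≠ [] := by intro h; rw [h] at hS'head; simp at hS'head
  have hSsuff : S <:+ P := List.dropWhile_suffix _
  have hS'suff : S' <:+ P' := List.dropWhile_suffix _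
  -- last elements
  have hSlast : S.getLast? = some v := by
    obtain ⟨t, ht⟩ := hSsuff
    rw [← hP.1.2.2, ← ht, List.getLast?_append_of_ne_nil _ hSne]
  have hS'last : S'.getLast? = some v := by
    obtain ⟨t, ht⟩ := hS'suff
    rw [← hP'.1.2.2, ← ht, List.getLast?_append_of_ne_nil _ hS'ne]
  -- combined chains: edges of S (resp. S') avoid both F and F'
  have hcS : List.Chain' (fun a b => E a b ∧
      ((a, b) ∉ F ∧ (b, a) ∉ F) ∧ (a, b) ∉ F' ∧ (b, a) ∉ F') S := by
    rw [chain'_iff_zip]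
    intro a b hab
    have h1 := (chain'_iff_zip S).1 (hP.1.1.suffix hSsuff) a b hab
    have h2 := havoidP a b hab
    simp only [Set.mem_union, not_or] at h2
    exact ⟨h1.1, ⟨h1.2.1, h1.2.2⟩, h2.1.2, h2.2.2⟩
  have hcS' : List.Chain' (fun a b => E a b ∧
      ((a, b) ∉ F ∧ (b, a) ∉ F) ∧ (a, b) ∉ F' ∧ (b, a) ∉ F') S' := by
    rw [chain'_iff_zip]
    intro a b hab
    have h1 := (chain'_iff_zip S').1 (hP'.1.1.suffix hS'suff) a b hab
    have h2 := havoidP' a b hab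
    simp only [Set.mem_union, not_or] at h2
    exact ⟨h1.1, ⟨h2.1.1, h2.2.1⟩, h1.2.1, h1.2.2⟩
  have hcS'F : List.Chain' (fun a b => E a b ∧ (a, b) ∉ F ∧ (b, a) ∉ F) S' :=
    hcS'.imp (fun a b h => ⟨h.1, h.2.1⟩)
  have hcSF' : List.Chain' (fun a b => E a b ∧ (a, b) ∉ F' ∧ (b, a) ∉ F') S :=
    hcS.imp (fun a b h => ⟨h.1, h.2.2⟩)
  have key1 := aux E v s F P hP w hwP S' hcS'F hS'head hS'last
  have key2 := aux E v s' F' P' hP' w hwP' S hcSF' hShead hSlast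
  have hlen : S.length = S'.length := le_antisymm key1.1 key2.1
  rcases key1.2 hlen.symm with h | h
  · exact h
  rcases key2.2 hlen with h' | h'
  · exact h'.symm
  exact absurd h' (asymm_of _ h)
end
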